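/- Let X be an infinite locally finite connected multigraph with minimum degree 2. Then for every oriented edge e, the set of oriented edges f reachable from e by a non-backtracking path (e ⇒ f) is infinite. -/

import Mathlib

open scoped BigOperators
open Filter

/-- A multigraph given by its set of *oriented* edges. Each oriented edge `e`
has an initial vertex `tail e = e⁻`, a terminal vertex `head e = e⁺`, and a
reversal `bar e = ě` with `ě ≠ e` (loops are counted twice). Local finiteness
is built in. -/
structure Multigraph where
  V : Type
  E : Type
  tail : E → V
  head : E → V
  bar : E → E
  bar_bar : ∀ e, bar (bar e) = e
  bar_ne : ∀ e, bar e ≠ e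
  head_bar : ∀ e, head (bar e) = tail e
  locFin : ∀ x, {e | tail e = x}.Finite

namespace Multigraph
variable (G : Multigraph)

/-- The degree of a vertex: the number of oriented edges emanating from it. -/
noncomputable def deg (x : G.V) : ℕ := (G.locFin x).toFinset.card

/-- `e → f`: `f` may follow `e` in a non-backtracking walk. -/
def Step (e f : G.E) : Prop := G.tail f = G.head e ∧ f ≠ G.bar e

/-- `e ⇒ f`: there is a non-backtracking walk from `e` to `f`. -/
def Reach : G.E → G.E → Prop := Relation.ReflTransGen G.Step

/-- One-step transition probabilities of the edge non-backtracking random walk. -/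
noncomputable def q (e f : G.E) : ℝ :=
  open Classical in
  if G.Step e f then 1 / ((G.deg (G.head e) : ℝ) - 1) else 0

/-- `n`-step transition probabilities `q_E^(n)` of the edge NBRW. -/
noncomputable def qn (G : Multigraph) : ℕ → G.E → G.E → ℝ
  | 0, e, f => open Classical in if e = f then 1 else 0
  | n + 1, e, f => ∑' g : G.E, qn G n e g * G.q g f

/-- Vertex NBRW transition probabilities:
`q^(n)(x,y) = (1/deg x) ∑_{e⁺=x, f⁺=y} q_E^(n)(e,f)`. -/
noncomputable def qv (n : ℕ) (x y : G.V) : ℝ :=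
  (1 / (G.deg x : ℝ)) *
    ∑' (e : {e : G.E // G.head e = x}) (f : {f : G.E // G.head f = y}),
      G.qn n e.1 f.1

def Adj (x y : G.V) : Prop := ∃ e : G.E, G.tail e = x ∧ G.head e = y

def Connected : Prop := ∀ x y : G.V, Relation.ReflTransGen G.Adj x y

/-- There is a walk of length `n` from `x` to `y`. -/
def WalkLen (G : Multigraph) : ℕ → G.V → G.V → Prop
  | 0, x, y => x = y
  | n + 1, x, y => ∃ z, G.Adj x z ∧ WalkLen G n z y

/-- Graph distance. -/
noncomputable def dist (x y : G.V) : ℕ := sInf {n | G.WalkLen n x y}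

/-- A cycle: a nonempty list of distinct oriented edges, with distinct initial
vertices, such that consecutive edges (cyclically) form non-backtracking steps. -/
def IsCycle (l : List G.E) : Prop :=
  l ≠ [] ∧ l.Nodup ∧ (l.map G.tail).Nodup ∧ List.Chain' G.Step (l ++ l.take 1)

/-- Small cycles are dense: some radius `R` works for every ball. -/
def SmallCyclesDense : Prop :=
  ∃ R : ℕ, ∀ x : G.V, ∃ l : List G.E, G.IsCycle l ∧ ∀ e ∈ l, G.dist x (G.tail e) ≤ R

/-- `X` is a (finite) cycle graph. -/
def IsCycleGraph : Prop := (Set.univ : Set G.V).Finite ∧ ∀ x, G.deg x = 2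

def Bipartite : Prop := ∃ c : G.V → Bool, ∀ e : G.E, c (G.tail e) ≠ c (G.head e)

end Multigraph

/-- In an infinite locally finite connected multigraph with minimum
degree 2, from every oriented edge the set of edges reachable by a
non-backtracking walk is infinite. -/
theorem nbrw_reach_infinite (G : Multigraph) [Infinite G.V]
    (hconn : G.Connected) (hdeg : ∀ x, 2 ≤ G.deg x) :
    ∀ e : G.E, {f : G.E | G.Reach e f}.Infinite := by
  intro e
  by_contra hfin
  rw [Set.not_infinite] at hfin
  -- every edge has a successor
  have hsucc : ∀ f : G.E, ∃ g : G.E, G.Step f g := by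
    intro f
    have hcard : 1 < ((G.locFin (G.head f)).toFinset).card := by
      have := hdeg (G.head f)
      exact this
    obtain ⟨g, hg, hgne⟩ := Finset.exists_mem_ne hcard (G.bar f)
    refine ⟨g, ?_, hgne⟩
    simpa using (Set.Finite.mem_toFinset _).1 hg
  choose σ hσ using hsucc
  -- iterates of σ starting at e stay reachable from any start
  have hiter : ∀ (a : G.E) (n : ℕ), G.Reach a (σ^[n] a) := by
    intro a n
    induction n with
    | zero => exact Relation.ReflTransGen.refl
    | succ n ih =>
      rw [Function.iterate_succ_apply']
      exact Relation.ReflTransGen.tail ih (hσ _)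
  -- pigeonhole: find a cycle
  have : Finite {f : G.E | G.Reach e f} := hfin
  obtain ⟨i, j, hlt, hijeq'⟩ : ∃ i j : ℕ, i < j ∧ σ^[i] e = σ^[j] e := by
    obtain ⟨i, j, hij, hijeq⟩ :=
      Finite.exists_ne_map_eq_of_infinite
        (fun n : ℕ => (⟨σ^[n] e, hiter e n⟩ : {f : G.E | G.Reach e f}))
    have heq' : σ^[i] e = σ^[j] e := congrArg Subtype.val hijeq
    rcases lt_or_gt_of_ne hij with h | h
    · exact ⟨i, j, h, heq'⟩
    · exact ⟨j, i, h, heq'.symm⟩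
  set f : G.E := σ^[i] e with hf
  have hm : 1 ≤ j - i := by omega
  have hcycle : σ^[j - i] f = f := by
    rw [hf, ← Function.iterate_add_apply]
    rw [show j - i + i = j by omega]
    exact hijeq'.symm
  -- tail f is a head of an edge reachable from f
  have htailf : ∃ g, G.Reach f g ∧ G.head g = G.tail f := by
    refine ⟨σ^[j - i - 1] f, hiter f _, ?_⟩
    have hstep : G.Step (σ^[j - i - 1] f) (σ^[j - i] f) := by
      have h2 : σ (σ^[j - i - 1] f) = σ^[j - i] f := by
        have h3 : σ^[j - i - 1 + 1] f = σ^[j - i] f := by congr 1; omega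
        rw [← h3, Function.iterate_succ_apply']
      have := hσ (σ^[j - i - 1] f)
      rwa [h2] at this
    rw [hcycle] at hstep
    exact hstep.1.symm
  -- every edge reachable from f has its tail in U
  have htail : ∀ g, G.Reach f g → ∃ g', G.Reach f g' ∧ G.head g' = G.tail g := by
    intro g hg
    rcases Relation.ReflTransGen.cases_tail hg with h | ⟨c, hc, hstep⟩
    · rw [h]; exact htailf
    · exact ⟨c, hc, hstep.1.symm⟩
  set U : Set G.V := {x | ∃ g, G.Reach f g ∧ G.head g = x} with hU
  -- U is closed under adjacency
  have hclosed : ∀ x y, x ∈ U → G.Adj x y → y ∈ U := by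
    rintro x y ⟨g, hg, hgx⟩ ⟨h, hhx, hhy⟩
    by_cases hbar : h = G.bar g
    · subst hbar
      obtain ⟨g', hg', hg'h⟩ := htail g hg
      exact ⟨g', hg', by rw [hg'h, ← G.head_bar g, hhy]⟩
    · have hstep : G.Step g h := ⟨by rw [hhx, hgx], hbar⟩
      exact ⟨h, Relation.ReflTransGen.tail hg hstep, hhy⟩
  -- by connectivity, U = univ
  have hall : ∀ v : G.V, v ∈ U := by
    intro v
    have hchain := hconn (G.head f) v
    induction hchain with
    | refl => exact ⟨f, Relation.ReflTransGen.refl, rfl⟩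
    | tail _ hadj ih => exact hclosed _ _ ih hadj
  -- but U is finite: it is contained in the image of a finite set
  have hUfin : U.Finite := by
    have hsub : U ⊆ G.head '' {g | G.Reach e g} := by
      rintro x ⟨g, hg, hgx⟩
      exact ⟨g, (hiter e i).trans hg, hgx⟩
    exact (hfin.image G.head).subset hsub
  exact Set.infinite_univ (hUfin.subset (fun v _ => hall v))
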